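/- Let n₁, n₂ ∈ ℝ³ be orthogonal unit vectors and ρ a qubit density matrix. Then every pure-state decomposition ρ = ∑ₖ pₖ |ψₖ⟩⟨ψₖ| satisfies ∑ₖ pₖ (ΔL_{n₁})²_{ψₖ} + (ΔL_{n₂})²_ρ ≥ 1/4, and moreover there exists a pure-state decomposition with ∑ₖ pₖ (ΔL_{n₁})²_{ψₖ} + (ΔL_{n₂})²_ρ ≤ Tr(ρ²)/2. (Since the quantum Fisher information is the convex roof of four times the variance, this expresses the bounds 1/4 ≤ (1/4)F_Q[ρ, L_{n₁}] + (ΔL_{n₂})²_ρ ≤ (1 + ‖r‖²)/4 in terms of the purity.) -/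

import Mathlib

open Matrix BigOperators
open scoped ComplexOrder

/-- The Pauli matrix σx. -/
def sigmaX : Matrix (Fin 2) (Fin 2) ℂ := !![0, 1; 1, 0]

/-- The Pauli matrix σy. -/
def sigmaY : Matrix (Fin 2) (Fin 2) ℂ := !![0, -Complex.I; Complex.I, 0]

/-- The Pauli matrix σz. -/
def sigmaZ : Matrix (Fin 2) (Fin 2) ℂ := !![1, 0; 0, -1]

/-- The spin-1/2 operator L_n = (n₁σx + n₂σy + n₃σz)/2 along the direction n ∈ ℝ³. -/
noncomputable def Lspin (n : Fin 3 → ℝ) : Matrix (Fin 2) (Fin 2) ℂ :=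
  (1 / 2 : ℂ) • ((n 0 : ℂ) • sigmaX + (n 1 : ℂ) • sigmaY + (n 2 : ℂ) • sigmaZ)

/-- A qubit density matrix: 2×2 positive semidefinite with unit trace. -/
def IsDensity (ρ : Matrix (Fin 2) (Fin 2) ℂ) : Prop :=
  ρ.PosSemidef ∧ ρ.trace = 1

/-- The rank-one projection |ψ⟩⟨ψ|. -/
def ketbra (ψ : Fin 2 → ℂ) : Matrix (Fin 2) (Fin 2) ℂ :=
  Matrix.vecMulVec ψ (star ψ)

/-- Pure-state variance (ΔA)²_ψ = ⟨ψ, A²ψ⟩ − ⟨ψ, Aψ⟩². -/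
noncomputable def pureVar (A : Matrix (Fin 2) (Fin 2) ℂ) (ψ : Fin 2 → ℂ) : ℝ :=
  (star ψ ⬝ᵥ (A * A).mulVec ψ).re - ((star ψ ⬝ᵥ A.mulVec ψ).re) ^ 2

/-- Mixed-state variance (ΔA)²_ρ = Tr(A²ρ) − (Tr(Aρ))². -/
noncomputable def mixVar (A ρ : Matrix (Fin 2) (Fin 2) ℂ) : ℝ :=
  ((A * A * ρ).trace).re - (((A * ρ).trace).re) ^ 2

/-- The purity Tr(ρ²). -/
noncomputable def purity (ρ : Matrix (Fin 2) (Fin 2) ℂ) : ℝ :=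
  ((ρ * ρ).trace).re

/- ########## auxiliary lemmas ########## -/

lemma Lspin_eq (n : Fin 3 → ℝ) :
    Lspin n = !![(n 2 : ℂ)/2, ((n 0 : ℂ) - (n 1 : ℂ)*Complex.I)/2;
                 ((n 0 : ℂ) + (n 1 : ℂ)*Complex.I)/2, -(n 2 : ℂ)/2] := by
  ext i j
  fin_cases i <;> fin_cases j <;> simp [Lspin, sigmaX, sigmaY, sigmaZ] <;> ring

lemma Lsq (n : Fin 3 → ℝ) (h : n ⬝ᵥ n = 1) :
    Lspin n * Lspin n = (1/4 : ℂ) • 1 := by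
  have h' : (n 0 : ℂ)^2 + (n 1 : ℂ)^2 + (n 2 : ℂ)^2 = 1 := by
    simp only [dotProduct, Fin.sum_univ_three] at h
    exact_mod_cast congrArg (Complex.ofReal) (by linarith [h] : n 0 ^2 + n 1^2 + n 2^2 = 1)
  rw [Lspin_eq]
  ext i j
  fin_cases i <;> fin_cases j <;>
    simp [Matrix.mul_apply, Fin.sum_univ_two, Matrix.one_apply] <;>
    ring_nf <;> simp only [Complex.I_sq] <;>
    first
      | linear_combination (-1/4 : ℂ) * h'
      | linear_combination (1/4 : ℂ) * h'
      | linear_combination (-1/2 : ℂ) * h'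
      | linear_combination (1/2 : ℂ) * h'
      | ring1

noncomputable def bloch (ψ : Fin 2 → ℂ) : Fin 3 → ℝ :=
  ![2 * ((starRingEnd ℂ) (ψ 0) * ψ 1).re, 2 * ((starRingEnd ℂ) (ψ 0) * ψ 1).im,
    Complex.normSq (ψ 0) - Complex.normSq (ψ 1)]

lemma trace_mul_ketbra (A : Matrix (Fin 2) (Fin 2) ℂ) (ψ : Fin 2 → ℂ) :
    (A * ketbra ψ).trace = star ψ ⬝ᵥ A.mulVec ψ := by
  simp [ketbra, Matrix.trace, Matrix.mul_apply, Matrix.vecMulVec_apply, dotProduct,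
    Matrix.mulVec, Fin.sum_univ_two]
  ring

lemma trace_ketbra (ψ : Fin 2 → ℂ) : (ketbra ψ).trace = star ψ ⬝ᵥ ψ := by
  simp [ketbra, Matrix.trace, Matrix.vecMulVec_apply, dotProduct, Fin.sum_univ_two]
  ring

lemma exp_eq (n : Fin 3 → ℝ) (ψ : Fin 2 → ℂ) :
    star ψ ⬝ᵥ (Lspin n).mulVec ψ = (((n ⬝ᵥ bloch ψ) / 2 : ℝ) : ℂ) := by
  rw [Lspin_eq]
  apply Complex.ext <;>
    simp [dotProduct, Matrix.mulVec, bloch, Fin.sum_univ_two, Fin.sum_univ_three,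
      Complex.add_re, Complex.add_im, Complex.mul_re, Complex.mul_im, Complex.div_re,
      Complex.div_im, Complex.normSq_apply, Complex.ofReal_re] <;>
    ring

lemma bloch_norm (ψ : Fin 2 → ℂ) (hψ : star ψ ⬝ᵥ ψ = 1) :
    bloch ψ ⬝ᵥ bloch ψ = 1 := by
  have h : Complex.normSq (ψ 0) + Complex.normSq (ψ 1) = 1 := by
    have := congrArg Complex.re hψ
    simpa [dotProduct, Fin.sum_univ_two, Complex.normSq_apply, Complex.add_re,
      Complex.mul_re] using this
  simp only [bloch, dotProduct, Fin.sum_univ_three, Matrix.cons_val_zero,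
    Matrix.cons_val_one, Matrix.head_cons, Matrix.cons_val_two, Matrix.tail_cons]
  simp only [Complex.normSq_apply, Complex.mul_re, Complex.mul_im, Complex.conj_re,
    Complex.conj_im] at *
  nlinarith [h]

lemma bessel (n₁ n₂ s : Fin 3 → ℝ) (h11 : n₁ ⬝ᵥ n₁ = 1) (h22 : n₂ ⬝ᵥ n₂ = 1)
    (h12 : n₁ ⬝ᵥ n₂ = 0) (hs : s ⬝ᵥ s = 1) :
    (n₁ ⬝ᵥ s)^2 + (n₂ ⬝ᵥ s)^2 ≤ 1 := by
  simp only [dotProduct, Fin.sum_univ_three] at *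
  have key : (s 0 - (n₁ 0 * s 0 + n₁ 1 * s 1 + n₁ 2 * s 2) * n₁ 0 - (n₂ 0 * s 0 + n₂ 1 * s 1 + n₂ 2 * s 2) * n₂ 0)^2
      + (s 1 - (n₁ 0 * s 0 + n₁ 1 * s 1 + n₁ 2 * s 2) * n₁ 1 - (n₂ 0 * s 0 + n₂ 1 * s 1 + n₂ 2 * s 2) * n₂ 1)^2
      + (s 2 - (n₁ 0 * s 0 + n₁ 1 * s 1 + n₁ 2 * s 2) * n₁ 2 - (n₂ 0 * s 0 + n₂ 1 * s 1 + n₂ 2 * s 2) * n₂ 2)^2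
      = 1 - (n₁ 0 * s 0 + n₁ 1 * s 1 + n₁ 2 * s 2)^2 - (n₂ 0 * s 0 + n₂ 1 * s 1 + n₂ 2 * s 2)^2 := by
    linear_combination hs + (n₁ 0 * s 0 + n₁ 1 * s 1 + n₁ 2 * s 2)^2 * h11
      + (n₂ 0 * s 0 + n₂ 1 * s 1 + n₂ 2 * s 2)^2 * h22
      + 2*(n₁ 0 * s 0 + n₁ 1 * s 1 + n₁ 2 * s 2)*(n₂ 0 * s 0 + n₂ 1 * s 1 + n₂ 2 * s 2) * h12
  linarith [key, sq_nonneg (s 0 - (n₁ 0 * s 0 + n₁ 1 * s 1 + n₁ 2 * s 2) * n₁ 0 - (n₂ 0 * s 0 + n₂ 1 * s 1 + n₂ 2 * s 2) * n₂ 0),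
    sq_nonneg (s 1 - (n₁ 0 * s 0 + n₁ 1 * s 1 + n₁ 2 * s 2) * n₁ 1 - (n₂ 0 * s 0 + n₂ 1 * s 1 + n₂ 2 * s 2) * n₂ 1),
    sq_nonneg (s 2 - (n₁ 0 * s 0 + n₁ 1 * s 1 + n₁ 2 * s 2) * n₁ 2 - (n₂ 0 * s 0 + n₂ 1 * s 1 + n₂ 2 * s 2) * n₂ 2)]

lemma jensen {m : ℕ} (p g : Fin m → ℝ) (hp : ∀ k, 0 ≤ p k) (hps : ∑ k, p k = 1) :
    (∑ k, p k * g k)^2 ≤ ∑ k, p k * g k ^ 2 := by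
  have h := Finset.sum_mul_sq_le_sq_mul_sq Finset.univ (fun k => Real.sqrt (p k))
    (fun k => Real.sqrt (p k) * g k)
  have e1 : ∀ k : Fin m, Real.sqrt (p k) * (Real.sqrt (p k) * g k) = p k * g k := by
    intro k; rw [← mul_assoc, Real.mul_self_sqrt (hp k)]
  have e2 : ∀ k : Fin m, Real.sqrt (p k) ^ 2 = p k := fun k => Real.sq_sqrt (hp k)
  have e3 : ∀ k : Fin m, (Real.sqrt (p k) * g k) ^ 2 = p k * g k ^ 2 := by
    intro k; rw [mul_pow, e2]
  simp only [e1, e2, e3] at h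
  simpa [hps] using h

lemma mat2_eq (A B : Matrix (Fin 2) (Fin 2) ℂ) (e00 : A 0 0 = B 0 0) (e01 : A 0 1 = B 0 1)
    (e10 : A 1 0 = B 1 0) (e11 : A 1 1 = B 1 1) : A = B := by
  ext i j; fin_cases i <;> fin_cases j <;> assumption

lemma exists_ketbra (M : Matrix (Fin 2) (Fin 2) ℂ)
    (hH : M 1 0 = star (M 0 1)) (h00 : (M 0 0).im = 0) (h11 : (M 1 1).im = 0)
    (htr : (M 0 0).re + (M 1 1).re = 1)
    (hdet : (M 0 0).re * (M 1 1).re = Complex.normSq (M 0 1)) :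
    ∃ ψ : Fin 2 → ℂ, star ψ ⬝ᵥ ψ = 1 ∧ ketbra ψ = M := by
  set a := (M 0 0).re with ha'
  set d := (M 1 1).re with hd'
  set b := M 0 1 with hb'
  have ha : 0 ≤ a := by nlinarith [Complex.normSq_nonneg b]
  have hM00 : M 0 0 = (a : ℂ) := Complex.ext rfl h00
  have hM11 : M 1 1 = (d : ℂ) := Complex.ext rfl h11
  have htrC : M.trace = 1 := by
    have : (a : ℂ) + (d : ℂ) = 1 := by
      rw [← Complex.ofReal_add]; exact_mod_cast congrArg Complex.ofReal htr
    rw [Matrix.trace_fin_two, hM00, hM11]; exact this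
  suffices hk : ∃ ψ : Fin 2 → ℂ, ketbra ψ = M by
    obtain ⟨ψ, hψ⟩ := hk
    exact ⟨ψ, by rw [← trace_ketbra, hψ, htrC], hψ⟩
  by_cases haz : a = 0
  · have hb0 : b = 0 := by
      have : Complex.normSq b = 0 := by rw [← hdet, haz, zero_mul]
      exact Complex.normSq_eq_zero.mp this
    have hd1 : d = 1 := by linarith
    refine ⟨![0, 1], ?_⟩
    apply mat2_eq <;>
      simp [ketbra, Matrix.vecMulVec_apply, hM00, hM11, haz, hd1, hb0, hH,
        (show M 0 1 = 0 from hb0)]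
  · have hapos : 0 < a := lt_of_le_of_ne ha (Ne.symm haz)
    have hsqC : ((Real.sqrt a : ℝ) : ℂ) * ((Real.sqrt a : ℝ) : ℂ) = (a:ℂ) := by
      rw [← Complex.ofReal_mul]; norm_cast; exact Real.mul_self_sqrt ha
    have hsqne : ((Real.sqrt a : ℝ) : ℂ) ≠ 0 := by
      simpa using ne_of_gt (Real.sqrt_pos.mpr hapos)
    have hane : ((a:ℝ) : ℂ) ≠ 0 := by exact_mod_cast haz
    have hnsqC : b * (starRingEnd ℂ) b = ((a:ℝ) : ℂ) * ((d:ℝ) : ℂ) := by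
      rw [Complex.mul_conj, ← Complex.ofReal_mul]
      exact_mod_cast congrArg Complex.ofReal hdet.symm
    refine ⟨![(Real.sqrt a : ℂ), star b / (Real.sqrt a : ℂ)], ?_⟩
    apply mat2_eq <;>
      simp only [ketbra, Matrix.vecMulVec_apply, Matrix.cons_val_zero, Matrix.cons_val_one,
        Matrix.head_cons, Pi.star_apply, Complex.star_def, map_div₀, Complex.conj_ofReal,
        Complex.conj_conj, hM00, hM11, hH] <;>
      (try field_simp) <;>
      first
        | rfl
        | ring1
        | linear_combination hsqC
        | linear_combination hnsqC
        | linear_combination hnsqC - ((d:ℝ):ℂ) * hsqC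
        | linear_combination hnsqC + ((d:ℝ):ℂ) * hsqC
        | linear_combination ((d:ℝ):ℂ) * hsqC - hnsqC

lemma pureVar_eq (n : Fin 3 → ℝ) (hn : n ⬝ᵥ n = 1) (ψ : Fin 2 → ℂ)
    (hψ : star ψ ⬝ᵥ ψ = 1) :
    pureVar (Lspin n) ψ = 1/4 - ((n ⬝ᵥ bloch ψ)/2)^2 := by
  unfold pureVar
  rw [Lsq n hn, exp_eq]
  have h1 : star ψ ⬝ᵥ ((1/4 : ℂ) • (1 : Matrix (Fin 2) (Fin 2) ℂ)).mulVec ψ = (1/4 : ℂ) := by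
    rw [Matrix.smul_mulVec, Matrix.one_mulVec, dotProduct_smul, hψ]
    simp
  rw [h1]
  norm_num

lemma mixVar_eq (n : Fin 3 → ℝ) (hn : n ⬝ᵥ n = 1) (ρ : Matrix (Fin 2) (Fin 2) ℂ)
    (htr : ρ.trace = 1) :
    mixVar (Lspin n) ρ = 1/4 - ((Lspin n * ρ).trace.re)^2 := by
  unfold mixVar
  rw [Lsq n hn, Matrix.smul_mul, Matrix.one_mul, Matrix.trace_smul, htr]
  norm_num

lemma exists_ketbra_shift (ρ : Matrix (Fin 2) (Fin 2) ℂ) (n : Fin 3 → ℝ) (a d : ℝ) (b : ℂ)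
    (α : ℝ)
    (hρ00 : ρ 0 0 = (a:ℂ)) (hρ11 : ρ 1 1 = (d:ℂ)) (hρ01 : ρ 0 1 = b)
    (hρ10 : ρ 1 0 = star b) (htr : a + d = 1) (hn : n ⬝ᵥ n = 1)
    (hroot : a*d - Complex.normSq b
      - α*(n 2*(a-d)/2 + n 0*b.re - n 1*b.im) - α^2/4 = 0) :
    ∃ ψ, star ψ ⬝ᵥ ψ = 1 ∧ ketbra ψ = ρ + α • Lspin n := by
  have hn' : n 0 ^2 + n 1 ^2 + n 2 ^2 = 1 := by
    simpa [dotProduct, Fin.sum_univ_three, sq] using hn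
  apply exists_ketbra
  · rw [Lspin_eq]
    apply Complex.ext <;>
      simp [Matrix.add_apply, Matrix.smul_apply, hρ10, hρ01, Complex.add_re, Complex.add_im,
        Complex.real_smul, Complex.mul_re, Complex.mul_im, Complex.div_re, Complex.div_im,
        Complex.normSq_apply, Complex.conj_re, Complex.conj_im] <;> ring
  · rw [Lspin_eq]
    simp [Matrix.add_apply, Matrix.smul_apply, hρ00, Complex.add_im, Complex.real_smul,
      Complex.mul_im, Complex.div_im, Complex.div_re, Complex.normSq_apply]
  · rw [Lspin_eq]
    simp [Matrix.add_apply, Matrix.smul_apply, hρ11, Complex.add_im, Complex.real_smul,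
      Complex.mul_im, Complex.div_im, Complex.div_re, Complex.normSq_apply]
  · rw [Lspin_eq]
    simp [Matrix.add_apply, Matrix.smul_apply, hρ00, hρ11, Complex.add_re, Complex.real_smul,
      Complex.mul_re, Complex.div_re, Complex.normSq_apply]
    linarith
  · rw [Lspin_eq]
    simp only [Matrix.add_apply, Matrix.smul_apply, hρ00, hρ11, hρ01, Matrix.cons_val_zero,
      Matrix.cons_val_one, Matrix.head_cons, Matrix.cons_val', Matrix.empty_val',
      Matrix.cons_val_fin_one]
    simp [Complex.normSq_apply, Complex.add_re, Complex.add_im, Complex.real_smul,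
      Complex.mul_re, Complex.mul_im, Complex.div_re, Complex.div_im, Complex.normSq_apply,
      Complex.ofReal_re, Complex.ofReal_im]
    rw [Complex.normSq_apply] at hroot
    first
      | linear_combination hroot - (α^2/4) * hn'
      | linear_combination hroot + (α^2/4) * hn'
      | linear_combination hroot - (α^2/2) * hn'
      | linear_combination hroot + (α^2/2) * hn'

lemma purity_eq (ρ : Matrix (Fin 2) (Fin 2) ℂ) (a d : ℝ) (b : ℂ)
    (hρ00 : ρ 0 0 = (a:ℂ)) (hρ11 : ρ 1 1 = (d:ℂ)) (hρ01 : ρ 0 1 = b)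
    (hρ10 : ρ 1 0 = star b) :
    purity ρ = a^2 + d^2 + 2*Complex.normSq b := by
  unfold purity
  rw [Matrix.trace_fin_two]
  simp [Matrix.mul_apply, Fin.sum_univ_two, hρ00, hρ11, hρ01, hρ10, Complex.add_re,
    Complex.mul_re, Complex.normSq_apply, Complex.conj_re, Complex.conj_im,
    Complex.ofReal_re, Complex.ofReal_im]
  ring

lemma traceL_re (ρ : Matrix (Fin 2) (Fin 2) ℂ) (n : Fin 3 → ℝ) (a d : ℝ) (b : ℂ)
    (hρ00 : ρ 0 0 = (a:ℂ)) (hρ11 : ρ 1 1 = (d:ℂ)) (hρ01 : ρ 0 1 = b)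
    (hρ10 : ρ 1 0 = star b) :
    (Lspin n * ρ).trace.re = n 2*(a-d)/2 + n 0*b.re - n 1*b.im := by
  rw [Lspin_eq, Matrix.trace_fin_two]
  simp [Matrix.mul_apply, Fin.sum_univ_two, hρ00, hρ11, hρ01, hρ10, Complex.add_re,
    Complex.mul_re, Complex.div_re, Complex.div_im, Complex.normSq_apply, Complex.conj_re,
    Complex.conj_im, Complex.ofReal_re, Complex.ofReal_im]
  ring

set_option maxHeartbeats 2000000 in
/-- Bounds 1/4 ≤ (1/4)F_Q[ρ,L_{n₁}] + (ΔL_{n₂})²_ρ ≤ Tr(ρ²)/2 for qubits, expressed via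
pure-state decompositions: every decomposition gives a sum ≥ 1/4, and some decomposition
gives a sum ≤ Tr(ρ²)/2. -/
theorem stmt_11 (n₁ n₂ : Fin 3 → ℝ)
    (h11 : n₁ ⬝ᵥ n₁ = 1) (h22 : n₂ ⬝ᵥ n₂ = 1) (h12 : n₁ ⬝ᵥ n₂ = 0)
    (ρ : Matrix (Fin 2) (Fin 2) ℂ) (hρ : IsDensity ρ) :
    (∀ (m : ℕ) (p : Fin m → ℝ) (ψ : Fin m → (Fin 2 → ℂ)),
      (∀ k, 0 ≤ p k) → (∑ k, p k) = 1 →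
      (∀ k, star (ψ k) ⬝ᵥ ψ k = 1) →
      ρ = (∑ k, p k • ketbra (ψ k)) →
      1 / 4 ≤ (∑ k, p k * pureVar (Lspin n₁) (ψ k)) + mixVar (Lspin n₂) ρ) ∧
    (∃ (m : ℕ) (p : Fin m → ℝ) (ψ : Fin m → (Fin 2 → ℂ)),
      (∀ k, 0 ≤ p k) ∧ (∑ k, p k) = 1 ∧
      (∀ k, star (ψ k) ⬝ᵥ ψ k = 1) ∧
      ρ = (∑ k, p k • ketbra (ψ k)) ∧
      (∑ k, p k * pureVar (Lspin n₁) (ψ k)) + mixVar (Lspin n₂) ρ ≤ purity ρ / 2) := by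
  obtain ⟨hpsd, htrρ⟩ := hρ
  have hherm := hpsd.1
  set a := (ρ 0 0).re with ha'
  set d := (ρ 1 1).re with hd'
  set b := ρ 0 1 with hb'
  have h00im : (ρ 0 0).im = 0 := by
    have h := congrArg Complex.im (hherm.apply 0 0)
    rw [Complex.star_def, Complex.conj_im] at h
    linarith
  have h11im : (ρ 1 1).im = 0 := by
    have h := congrArg Complex.im (hherm.apply 1 1)
    rw [Complex.star_def, Complex.conj_im] at h
    linarith
  have hρ00 : ρ 0 0 = (a:ℂ) := Complex.ext rfl h00im
  have hρ11 : ρ 1 1 = (d:ℂ) := Complex.ext rfl h11im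
  have hρ10 : ρ 1 0 = star b := (hherm.apply 1 0).symm
  have htrad : a + d = 1 := by
    have h := congrArg Complex.re htrρ
    rw [Matrix.trace_fin_two] at h
    simpa [Complex.add_re] using h
  have hdetρ : ρ.det = ((a*d - Complex.normSq b : ℝ) : ℂ) := by
    rw [Matrix.det_fin_two, hρ00, hρ11, hρ10]
    push_cast
    rw [Complex.star_def]
    linear_combination (-1 : ℂ) * Complex.mul_conj b
  have hδ : 0 ≤ a*d - Complex.normSq b := by
    have h1 := hpsd.det_nonneg
    rw [hdetρ] at h1
    exact Complex.zero_le_real.mp h1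
  constructor
  · -- lower bound
    intro m p ψ hp hps hψ hdec
    have hpv : ∀ k, pureVar (Lspin n₁) (ψ k) = 1/4 - ((n₁ ⬝ᵥ bloch (ψ k))/2)^2 :=
      fun k => pureVar_eq n₁ h11 (ψ k) (hψ k)
    have hmv := mixVar_eq n₂ h22 ρ htrρ
    have hfdec : (Lspin n₂ * ρ).trace.re = ∑ k, p k * ((n₂ ⬝ᵥ bloch (ψ k))/2) := by
      rw [hdec, Matrix.mul_sum, Matrix.trace_sum, Complex.re_sum]
      refine Finset.sum_congr rfl fun k _ => ?_
      rw [Matrix.mul_smul, Matrix.trace_smul, trace_mul_ketbra, exp_eq]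
      simp [Complex.smul_re]
    have hpoint : ∀ k, ((n₁ ⬝ᵥ bloch (ψ k))/2)^2 + ((n₂ ⬝ᵥ bloch (ψ k))/2)^2 ≤ 1/4 := by
      intro k
      have h := bessel n₁ n₂ (bloch (ψ k)) h11 h22 h12 (bloch_norm _ (hψ k))
      nlinarith [h]
    have hcs := jensen p (fun k => (n₂ ⬝ᵥ bloch (ψ k))/2) hp hps
    rw [hmv, hfdec]
    have hA : ∑ k, p k * pureVar (Lspin n₁) (ψ k)
        = ∑ k, (p k * (1/4) - p k * ((n₁ ⬝ᵥ bloch (ψ k))/2)^2) :=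
      Finset.sum_congr rfl fun k _ => by rw [hpv k]; ring
    rw [hA, Finset.sum_sub_distrib, ← Finset.sum_mul, hps]
    have hB : ∑ k, p k * ((n₁ ⬝ᵥ bloch (ψ k))/2)^2
        + ∑ k, p k * ((n₂ ⬝ᵥ bloch (ψ k))/2)^2 ≤ 1/4 := by
      rw [← Finset.sum_add_distrib]
      calc ∑ k, (p k * ((n₁ ⬝ᵥ bloch (ψ k))/2)^2 + p k * ((n₂ ⬝ᵥ bloch (ψ k))/2)^2)
          ≤ ∑ k, p k * (1/4) := by
            refine Finset.sum_le_sum fun k _ => ?_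
            have := hpoint k
            nlinarith [hp k, this]
        _ = 1/4 := by rw [← Finset.sum_mul, hps]; ring
    have hcs' : (∑ k, p k * ((n₂ ⬝ᵥ bloch (ψ k))/2))^2
        ≤ ∑ k, p k * ((n₂ ⬝ᵥ bloch (ψ k))/2)^2 := by
      simpa using hcs
    linarith [hB, hcs']
  · -- upper bound
    by_cases hδ0 : a*d - Complex.normSq b = 0
    · -- pure case
      obtain ⟨ψ0, hunit, hk⟩ := exists_ketbra ρ hρ10 h00im h11im htrad (by linarith)
      refine ⟨1, ![1], ![ψ0], by intro k; fin_cases k <;> norm_num,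
        by simp, by intro k; fin_cases k <;> simpa using hunit, by simp [hk], ?_⟩
      have hpur := purity_eq ρ a d b hρ00 hρ11 rfl hρ10
      rw [hpur]
      simp only [Fin.sum_univ_one, Matrix.cons_val_zero, one_mul]
      rw [pureVar_eq n₁ h11 ψ0 hunit, mixVar_eq n₂ h22 ρ htrρ]
      nlinarith [sq_nonneg ((n₁ ⬝ᵥ bloch ψ0)/2), sq_nonneg ((Lspin n₂ * ρ).trace.re),
        htrad, hδ0]
    · -- mixed case
      have hδpos : 0 < a*d - Complex.normSq b := lt_of_le_of_ne hδ (Ne.symm hδ0)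
      have hτc : (Lspin n₁ * ρ).trace.re = n₁ 2*(a-d)/2 + n₁ 0*b.re - n₁ 1*b.im :=
        traceL_re ρ n₁ a d b hρ00 hρ11 rfl hρ10
      set τ := (Lspin n₁ * ρ).trace.re with hτ'
      set D := 4*τ^2 + 4*(a*d - Complex.normSq b) with hD'
      have hDpos : 0 < D := by nlinarith [sq_nonneg τ]
      set s := Real.sqrt D with hs'
      have hs2 : s^2 = D := Real.sq_sqrt hDpos.le
      have hspos : 0 < s := Real.sqrt_pos.mpr hDpos
      have habs : 2*|τ| < s := by
        have h1 : (2*|τ|)^2 < s^2 := by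
          rw [hs2, hD']
          nlinarith [sq_abs τ, hδpos]
        exact lt_of_pow_lt_pow_left₀ 2 hspos.le h1
      obtain ⟨hτ1, hτ2⟩ := abs_lt.mp (show |2*τ| < s by rw [abs_mul, abs_two]; linarith)
      have hrootp : a*d - Complex.normSq b
          - (-2*τ + s)*(n₁ 2*(a-d)/2 + n₁ 0*b.re - n₁ 1*b.im) - (-2*τ + s)^2/4 = 0 := by
        rw [← hτc]
        linear_combination (-(1:ℝ)/4) * hs2 + (-(1:ℝ)/4) * hD' + ((1:ℝ)/4) * hD'
      have hrootm : a*d - Complex.normSq b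
          - (-2*τ - s)*(n₁ 2*(a-d)/2 + n₁ 0*b.re - n₁ 1*b.im) - (-2*τ - s)^2/4 = 0 := by
        rw [← hτc]
        linear_combination (-(1:ℝ)/4) * hs2
      clear_value τ D s
      obtain ⟨ψp, hup, hkp⟩ :=
        exists_ketbra_shift ρ n₁ a d b (-2*τ + s) hρ00 hρ11 rfl hρ10 htrad h11 hrootp
      obtain ⟨ψm, hum, hkm⟩ :=
        exists_ketbra_shift ρ n₁ a d b (-2*τ - s) hρ00 hρ11 rfl hρ10 htrad h11 hrootm
      refine ⟨2, ![(s + 2*τ)/(2*s), (s - 2*τ)/(2*s)], ![ψp, ψm], ?_, ?_, ?_, ?_, ?_⟩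
      · intro k
        fin_cases k <;> simp <;> apply div_nonneg <;> linarith
      · rw [Fin.sum_univ_two]
        simp only [Matrix.cons_val_zero, Matrix.cons_val_one, Matrix.head_cons]
        field_simp
        ring
      · intro k
        fin_cases k
        · simpa using hup
        · simpa using hum
      · rw [Fin.sum_univ_two]
        simp only [Matrix.cons_val_zero, Matrix.cons_val_one, Matrix.head_cons]
        rw [hkp, hkm]
        have hsne : s ≠ 0 := ne_of_gt hspos
        match_scalars <;> field_simp <;> ring
      · have hLL : (Lspin n₁ * Lspin n₁).trace.re = 1/2 := by
          rw [Lsq n₁ h11]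
          simp [Matrix.trace_smul, Matrix.trace_one]
          norm_num
        have he : ∀ (α : ℝ) (ψ' : Fin 2 → ℂ), ketbra ψ' = ρ + α • Lspin n₁ →
            (n₁ ⬝ᵥ bloch ψ')/2 = τ + α/2 := by
          intro α ψ' hk
          have h1 : (((n₁ ⬝ᵥ bloch ψ') / 2 : ℝ) : ℂ) = (Lspin n₁ * ketbra ψ').trace := by
            rw [trace_mul_ketbra, exp_eq]
          rw [hk, Matrix.mul_add, Matrix.trace_add, Matrix.mul_smul, Matrix.trace_smul] at h1
          have h2 := congrArg Complex.re h1
          simp only [Complex.ofReal_re, Complex.add_re, Complex.smul_re, hLL] at h2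
          rw [h2, ← hτ']
          rw [smul_eq_mul]
          ring
        have hep := he _ ψp hkp
        have hem := he _ ψm hkm
        have hpur := purity_eq ρ a d b hρ00 hρ11 rfl hρ10
        rw [hpur, Fin.sum_univ_two]
        simp only [Matrix.cons_val_zero, Matrix.cons_val_one, Matrix.head_cons]
        rw [pureVar_eq n₁ h11 ψp hup, pureVar_eq n₁ h11 ψm hum, mixVar_eq n₂ h22 ρ htrρ,
          hep, hem]
        have e1 : (s + 2*τ)/(2*s) + (s - 2*τ)/(2*s) = 1 := by field_simp; ring
        have hv1 : (τ + (-2*τ + s)/2)^2 = s^2/4 := by ring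
        have hv2 : (τ + (-2*τ - s)/2)^2 = s^2/4 := by ring
        rw [hv1, hv2]
        have hcomb : (s + 2*τ)/(2*s) * (1/4 - s^2/4) + (s - 2*τ)/(2*s) * (1/4 - s^2/4)
            = 1/4 - s^2/4 := by
          rw [← add_mul, e1, one_mul]
        rw [hcomb, hs2, hD']
        have hsq : a^2 + d^2 + 2*(a*d) = 1 := by linear_combination (a + d + 1) * htrad
        linarith [sq_nonneg ((Lspin n₂ * ρ).trace.re), sq_nonneg τ, hsq]
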